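/- Let E be a real inner product space and let Φ ⊆ E be a finite set of nonzero vectors such that Φ = −Φ and such that whenever r, s ∈ Φ and s = c·r for some real c > 0, then s = r. For a nonempty finite subset Ω ⊆ E define f_Ω : Φ → ℝ by f_Ω(r) := −min_{θ∈Ω} ⟨r, θ⟩. Then the ℝ-linear span of the set {f_Ω : Ω a nonempty finite subset of E}, inside the space of all functions Φ → ℝ, is the whole space. Equivalently, the convex cone generated by the functions f_Ω has dimension |Φ|. -/

import Mathlib

local notation "⟪" x ", " y "⟫" => @inner ℝ _ _ x y

private lemma inf3_eq {E : Type*} [NormedAddCommGroup E] [InnerProductSpace ℝ E] [DecidableEq E]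
    (r x y : E) (H : ({0, -x, -y} : Finset E).Nonempty) :
    -(({0, -x, -y} : Finset E).inf' H fun θ => (inner ℝ r θ : ℝ))
      = max 0 (max ⟪r, x⟫ ⟪r, y⟫) := by
  rw [Finset.inf'_insert (H := Finset.insert_nonempty _ _),
    Finset.inf'_insert (H := Finset.singleton_nonempty _), Finset.inf'_singleton]
  simp only [inner_zero_right, inner_neg_right, min_def, max_def]
  split_ifs <;> linarith

private lemma inf2_eq {E : Type*} [NormedAddCommGroup E] [InnerProductSpace ℝ E] [DecidableEq E]
    (r x : E) (H : ({0, -x} : Finset E).Nonempty) :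
    -(({0, -x} : Finset E).inf' H fun θ => (inner ℝ r θ : ℝ)) = max 0 ⟪r, x⟫ := by
  rw [Finset.inf'_insert (H := Finset.singleton_nonempty _), Finset.inf'_singleton]
  simp only [inner_zero_right, inner_neg_right, min_def, max_def]
  split_ifs <;> linarith

private lemma abs_combo {b x : ℝ} (h : |x| ≤ |b|) : |b + x| + |b - x| = 2 * |b| := by
  rcases le_total 0 b with hb | hb
  · rw [abs_of_nonneg hb, abs_le] at h
    rw [abs_of_nonneg hb, abs_of_nonneg (by linarith), abs_of_nonneg (by linarith)]
    ring
  · rw [abs_of_nonpos hb, abs_le] at h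
    rw [abs_of_nonpos hb, abs_of_nonpos (by linarith), abs_of_nonpos (by linarith)]
    ring

private lemma max_combo {a c ε : ℝ} (hε : 0 < ε) (h : a < 0 → ε * |c| ≤ -a) :
    max 0 (max a (a + ε * c)) + max 0 (max a (a - ε * c)) - 2 * max 0 a
      = if 0 ≤ a then ε * |c| else 0 := by
  rcases le_or_gt 0 a with ha | ha
  · rw [if_pos ha]
    rcases le_total 0 c with hc | hc
    · rw [abs_of_nonneg hc,
        max_eq_right (show a ≤ a + ε * c by nlinarith),
        max_eq_right (show (0:ℝ) ≤ a + ε * c by nlinarith),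
        max_eq_left (show a - ε * c ≤ a by nlinarith),
        max_eq_right ha]
      ring
    · rw [abs_of_nonpos hc,
        max_eq_left (show a + ε * c ≤ a by nlinarith),
        max_eq_right ha,
        max_eq_right (show a ≤ a - ε * c by nlinarith),
        max_eq_right (show (0:ℝ) ≤ a - ε * c by nlinarith)]
      ring
  · have h' := h ha
    have hc1 : ε * c ≤ ε * |c| := by nlinarith [le_abs_self c]
    have hc2 : -(ε * c) ≤ ε * |c| := by nlinarith [neg_le_abs c]
    rw [if_neg (not_le.mpr ha),
      max_eq_left (show max a (a + ε * c) ≤ 0 from max_le ha.le (by linarith)),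
      max_eq_left (show max a (a - ε * c) ≤ 0 from max_le ha.le (by linarith)),
      max_eq_left ha.le]
    ring

private lemma exists_pos_forall {α : Type*} (T : Finset α) (g : α → ℝ)
    (hg : ∀ i ∈ T, 0 < g i) : ∃ ε : ℝ, 0 < ε ∧ ∀ i ∈ T, ε ≤ g i := by
  rcases T.eq_empty_or_nonempty with rfl | hT
  · exact ⟨1, one_pos, by simp⟩
  · exact ⟨min 1 (T.inf' hT g), lt_min one_pos ((Finset.lt_inf'_iff hT).mpr hg),
      fun i hi => (min_le_right _ _).trans (Finset.inf'_le g hi)⟩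

private lemma exists_generic {E : Type*} [NormedAddCommGroup E] [InnerProductSpace ℝ E]
    (s : E) (hs : s ≠ 0) (T : Finset E)
    (hT : ∀ r ∈ T, ∀ c : ℝ, r ≠ c • s) :
    ∃ v : E, ⟪s, v⟫ = 0 ∧ ∀ r ∈ T, ⟪r, v⟫ ≠ 0 := by
  classical
  revert hT
  induction T using Finset.induction_on with
  | empty => intro _; exact ⟨0, by simp, by simp⟩
  | @insert x T hx ih =>
    intro hT
    obtain ⟨v, hv0, hv⟩ := ih (fun r hr => hT r (Finset.mem_insert_of_mem hr))
    by_cases hxv : ⟪x, v⟫ = 0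
    · -- need new v
      set u : E := x - (⟪x, s⟫ / ⟪s, s⟫) • s with hu
      have hss : ⟪s, s⟫ ≠ 0 := fun h => hs (inner_self_eq_zero.mp h)
      have hsu : ⟪s, u⟫ = 0 := by
        rw [hu, inner_sub_right, inner_smul_right, real_inner_comm s x]
        field_simp
        ring
      have hxu : ⟪x, u⟫ = ⟪u, u⟫ := by
        have hx' : x = u + (⟪x, s⟫ / ⟪s, s⟫) • s := by rw [hu]; abel
        nth_rewrite 1 [hx']
        rw [inner_add_left, real_inner_smul_left, hsu]
        ring
      have hu0 : u ≠ 0 := by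
        intro h
        exact hT x (Finset.mem_insert_self x T) (⟪x, s⟫ / ⟪s, s⟫)
          (by rw [← sub_eq_zero]; exact h)
      have huu : ⟪u, u⟫ ≠ 0 := fun h => hu0 (inner_self_eq_zero.mp h)
      obtain ⟨t, ht⟩ := Infinite.exists_notMem_finset
        ((insert x T).image fun y => -⟪y, v⟫ / ⟪y, u⟫)
      refine ⟨v + t • u, by rw [inner_add_right, inner_smul_right, hv0, hsu]; ring, ?_⟩
      intro r hr hcon
      rw [inner_add_right, inner_smul_right] at hcon
      by_cases hru : ⟪r, u⟫ = 0
      · rcases Finset.mem_insert.mp hr with rfl | hrT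
        · rw [hxu] at hru; exact huu hru
        · exact hv r hrT (by rw [hru, mul_zero, add_zero] at hcon; exact hcon)
      · apply ht
        refine Finset.mem_image.mpr ⟨r, hr, ?_⟩
        field_simp
        linarith [hcon]
    · exact ⟨v, hv0, fun r hr =>
        (Finset.mem_insert.mp hr).elim (fun h => h ▸ hxv) (hv r)⟩

/-- let `Φ` be a finite symmetric set of nonzero vectors of a real inner
product space, reduced in the sense that positively proportional members coincide.  For a
nonempty finite `Ω ⊆ E` let `f_Ω : Φ → ℝ` be `f_Ω(r) = -min_{θ∈Ω} ⟨r,θ⟩`.  Then the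
functions `f_Ω` span the whole space of functions `Φ → ℝ`. -/
theorem stmt_8 (E : Type*) [NormedAddCommGroup E] [InnerProductSpace ℝ E]
    (Φ : Finset E) (h0 : ∀ r ∈ Φ, r ≠ 0) (hsymm : ∀ r ∈ Φ, -r ∈ Φ)
    (hred : ∀ r ∈ Φ, ∀ s ∈ Φ, ∀ c : ℝ, 0 < c → s = c • r → s = r) :
    Submodule.span ℝ {f : ↥Φ → ℝ |
      ∃ (Ω : Finset E) (hΩ : Ω.Nonempty),
        f = fun r : ↥Φ => -(Ω.inf' hΩ fun θ => (inner ℝ (r : E) θ : ℝ))} = ⊤ := by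
  classical
  set S : Submodule ℝ (↥Φ → ℝ) := Submodule.span ℝ {f : ↥Φ → ℝ |
      ∃ (Ω : Finset E) (hΩ : Ω.Nonempty),
        f = fun r : ↥Φ => -(Ω.inf' hΩ fun θ => (inner ℝ (r : E) θ : ℝ))} with hSdef
  have hgen : ∀ (Ω : Finset E) (hΩ : Ω.Nonempty),
      (fun r : ↥Φ => -(Ω.inf' hΩ fun θ => (inner ℝ (r : E) θ : ℝ))) ∈ S :=
    fun Ω hΩ => Submodule.subset_span ⟨Ω, hΩ, rfl⟩
  -- Step 1 : half-space restricted absolute values of linear functionals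
  have step1 : ∀ s ∈ Φ, ∀ v : E,
      (fun r : ↥Φ => if 0 ≤ (inner ℝ (r : E) s : ℝ) then |(inner ℝ (r : E) v : ℝ)| else 0) ∈ S := by
    intro s hsΦ v
    obtain ⟨ε, hε, hεle⟩ := exists_pos_forall
      (Φ.filter fun r => (inner ℝ r s : ℝ) < 0)
      (fun r => (-(inner ℝ r s : ℝ)) / (|(inner ℝ r v : ℝ)| + 1))
      (by
        intro i hi
        rw [Finset.mem_filter] at hi
        exact div_pos (by linarith [hi.2]) (by positivity))
    have key1 : ∀ r : ↥Φ, ((inner ℝ (r : E) s : ℝ) < 0) →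
        ε * |(inner ℝ (r : E) v : ℝ)| ≤ -(inner ℝ (r : E) s : ℝ) := by
      intro r hr
      have h1 := hεle (r : E) (Finset.mem_filter.mpr ⟨r.2, hr⟩)
      rw [le_div_iff₀ (by positivity)] at h1
      nlinarith [abs_nonneg (inner ℝ (r : E) v : ℝ)]
    have h1 := hgen {0, -s, -(s + ε • v)} (by simp)
    have h2 := hgen {0, -s, -(s - ε • v)} (by simp)
    have h3 := hgen {0, -s} (by simp)
    have heq : (fun r : ↥Φ => if 0 ≤ (inner ℝ (r : E) s : ℝ) then |(inner ℝ (r : E) v : ℝ)| else 0)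
        = ε⁻¹ • ((fun r : ↥Φ => -(({0, -s, -(s + ε • v)} : Finset E).inf' (by simp)
              fun θ => (inner ℝ (r : E) θ : ℝ)))
          + (fun r : ↥Φ => -(({0, -s, -(s - ε • v)} : Finset E).inf' (by simp)
              fun θ => (inner ℝ (r : E) θ : ℝ)))
          - (2 : ℝ) • (fun r : ↥Φ => -(({0, -s} : Finset E).inf' (by simp)
              fun θ => (inner ℝ (r : E) θ : ℝ)))) := by
      funext r
      simp only [Pi.smul_apply, Pi.add_apply, Pi.sub_apply, smul_eq_mul]
      rw [inf3_eq, inf3_eq, inf2_eq, inner_add_right, inner_sub_right, real_inner_smul_right]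
      rw [show (max 0 (max (inner ℝ (r:E) s : ℝ) ((inner ℝ (r:E) s : ℝ) + ε * (inner ℝ (r:E) v : ℝ)))
            + max 0 (max (inner ℝ (r:E) s : ℝ) ((inner ℝ (r:E) s : ℝ) - ε * (inner ℝ (r:E) v : ℝ)))
            - 2 * max 0 (inner ℝ (r:E) s : ℝ))
          = if 0 ≤ (inner ℝ (r:E) s : ℝ) then ε * |(inner ℝ (r:E) v : ℝ)| else 0 from
        max_combo hε (key1 r)]
      split_ifs with h
      · field_simp
      · ring
    rw [heq]
    exact Submodule.smul_mem _ _
      (Submodule.sub_mem _ (Submodule.add_mem _ h1 h2) (Submodule.smul_mem _ _ h3))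
  -- Step 2 : delta functions
  have key : ∀ s ∈ Φ, (fun r : ↥Φ => if (r : E) = s then (1 : ℝ) else 0) ∈ S := by
    intro s hs
    have hs0 : s ≠ 0 := h0 s hs
    have hss : (0 : ℝ) < (inner ℝ s s : ℝ) := lt_of_le_of_ne real_inner_self_nonneg (Ne.symm fun h => hs0 (inner_self_eq_zero.mp h))
    obtain ⟨v, hv0, hv⟩ := exists_generic s hs0
      (Φ.filter fun r => 0 ≤ (inner ℝ r s : ℝ) ∧ r ≠ s)
      (by
        intro r hr c hrc
        rw [Finset.mem_filter] at hr
        obtain ⟨hrΦ, hrs, hrne⟩ := hr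
        rcases lt_trichotomy c 0 with hc | hc | hc
        · have : (inner ℝ r s : ℝ) = c * (inner ℝ s s : ℝ) := by
            rw [hrc, real_inner_smul_left]
          nlinarith
        · exact h0 r hrΦ (by rw [hrc, hc, zero_smul])
        · exact hrne (hred s hs r hrΦ c hc hrc))
    obtain ⟨ε, hε, hεle⟩ := exists_pos_forall
      (Φ.filter fun r => 0 ≤ (inner ℝ r s : ℝ) ∧ r ≠ s)
      (fun r => |(inner ℝ r v : ℝ)| / (|(inner ℝ r s : ℝ)| + 1))
      (by
        intro i hi
        have hiv := hv i hi
        rw [Finset.mem_filter] at hi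
        have : |(inner ℝ i v : ℝ)| > 0 := abs_pos.mpr hiv
        positivity)
    have h1 := step1 s hs (v + ε • s)
    have h2 := step1 s hs (v - ε • s)
    have h3 := step1 s hs v
    have heq : (fun r : ↥Φ => if (r : E) = s then (1 : ℝ) else 0)
        = (2 * ε * (inner ℝ s s : ℝ))⁻¹ •
          ((fun r : ↥Φ => if 0 ≤ (inner ℝ (r : E) s : ℝ) then |(inner ℝ (r : E) (v + ε • s) : ℝ)| else 0)
          + (fun r : ↥Φ => if 0 ≤ (inner ℝ (r : E) s : ℝ) then |(inner ℝ (r : E) (v - ε • s) : ℝ)| else 0)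
          - (2 : ℝ) • (fun r : ↥Φ => if 0 ≤ (inner ℝ (r : E) s : ℝ) then |(inner ℝ (r : E) v : ℝ)| else 0)) := by
      funext r
      simp only [Pi.smul_apply, Pi.add_apply, Pi.sub_apply, smul_eq_mul]
      rw [inner_add_right, inner_sub_right, real_inner_smul_right]
      by_cases hrs : (r : E) = s
      · rw [if_pos hrs, hrs, hv0, if_pos hss.le, if_pos hss.le, if_pos hss.le]
        simp only [zero_add, zero_sub, abs_neg, abs_zero]
        rw [abs_of_nonneg (show (0:ℝ) ≤ ε * (inner ℝ s s : ℝ) by positivity)]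
        field_simp
        ring
      · rw [if_neg hrs]
        by_cases hra : 0 ≤ (inner ℝ (r : E) s : ℝ)
        · rw [if_pos hra, if_pos hra, if_pos hra]
          have hmem : (r : E) ∈ Φ.filter fun r => 0 ≤ (inner ℝ r s : ℝ) ∧ r ≠ s :=
            Finset.mem_filter.mpr ⟨r.2, hra, hrs⟩
          have hb := hv (r : E) hmem
          have hle := hεle (r : E) hmem
          rw [le_div_iff₀ (by positivity)] at hle
          have habs : |ε * (inner ℝ (r : E) s : ℝ)| ≤ |(inner ℝ (r : E) v : ℝ)| := by
            rw [abs_mul, abs_of_pos hε]; nlinarith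
          have hcombo := abs_combo (b := (inner ℝ (r : E) v : ℝ)) (x := ε * (inner ℝ (r : E) s : ℝ)) habs
          rw [show |(inner ℝ (r:E) v : ℝ) + ε * (inner ℝ (r:E) s : ℝ)|
                + |(inner ℝ (r:E) v : ℝ) - ε * (inner ℝ (r:E) s : ℝ)|
                - 2 * |(inner ℝ (r:E) v : ℝ)| = 0 by linarith [hcombo]]
          ring
        · rw [if_neg hra, if_neg hra, if_neg hra]
          ring
    rw [heq]
    exact Submodule.smul_mem _ _
      (Submodule.sub_mem _ (Submodule.add_mem _ h1 h2) (Submodule.smul_mem _ _ h3))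
  -- conclude
  rw [eq_top_iff]
  intro f _
  rw [pi_eq_sum_univ f]
  apply Submodule.sum_mem
  intro i _
  apply Submodule.smul_mem
  have hi := key (i : E) i.2
  have : (fun j : ↥Φ => if i = j then (1 : ℝ) else 0)
      = (fun r : ↥Φ => if (r : E) = (i : E) then (1 : ℝ) else 0) := by
    funext j
    simp only [Subtype.ext_iff]
    by_cases h : (i : E) = (j : E)
    · rw [if_pos h, if_pos h.symm]
    · rw [if_neg h, if_neg (fun hh => h hh.symm)]
  rw [this]
  exact hi
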